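/- Young-type inequality in Morrey spaces: for $1 \le p \le \infty$ and $0 \le \mu < n$, if $\varphi \in L^1(\mathbb{R}^n)$ and $g \in M_{p,\mu}(\mathbb{R}^n)$, then the convolution satisfies $\|\varphi * g\|_{M_{p,\mu}} \le \|\varphi\|_{L^1} \|g\|_{M_{p,\mu}}$. -/

import Mathlib

open MeasureTheory ENNReal

noncomputable def morreyNorm (n : ℕ) (p : ℝ≥0∞) (μ : ℝ)
    {E : Type*} [NormedAddCommGroup E] (f : EuclideanSpace ℝ (Fin n) → E) : ℝ≥0∞ :=
  ⨆ (x₀ : EuclideanSpace ℝ (Fin n)) (R : ℝ) (_ : 0 < R),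
    ENNReal.ofReal (R ^ (-(μ / p.toReal))) *
      eLpNorm f p (volume.restrict (Metric.ball x₀ R))

open scoped Convolution

private lemma morrey_ball_bound (n : ℕ) (p : ℝ≥0∞) (μ : ℝ)
    (g : EuclideanSpace ℝ (Fin n) → ℂ) (x₀ : EuclideanSpace ℝ (Fin n)) {R : ℝ} (hR : 0 < R) :
    eLpNorm g p (volume.restrict (Metric.ball x₀ R)) ≤
      ENNReal.ofReal (R ^ (μ / p.toReal)) * morreyNorm n p μ g := by
  have h1 : ENNReal.ofReal (R ^ (-(μ / p.toReal))) *
      eLpNorm g p (volume.restrict (Metric.ball x₀ R)) ≤ morreyNorm n p μ g := by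
    refine le_trans (le_iSup (fun _ : 0 < R => ENNReal.ofReal (R ^ (-(μ / p.toReal))) *
      eLpNorm g p (volume.restrict (Metric.ball x₀ R))) hR) ?_
    refine le_trans (le_iSup (fun R : ℝ => ⨆ _ : 0 < R, ENNReal.ofReal (R ^ (-(μ / p.toReal))) *
      eLpNorm g p (volume.restrict (Metric.ball x₀ R))) R) ?_
    exact le_iSup (fun x₀ => ⨆ (R : ℝ) (_ : 0 < R), ENNReal.ofReal (R ^ (-(μ / p.toReal))) *
      eLpNorm g p (volume.restrict (Metric.ball x₀ R))) x₀
  calc eLpNorm g p (volume.restrict (Metric.ball x₀ R))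
      = ENNReal.ofReal (R ^ (μ / p.toReal)) * (ENNReal.ofReal (R ^ (-(μ / p.toReal))) *
        eLpNorm g p (volume.restrict (Metric.ball x₀ R))) := by
        rw [← mul_assoc, ← ENNReal.ofReal_mul (by positivity), ← Real.rpow_add hR,
          add_neg_cancel, Real.rpow_zero, ENNReal.ofReal_one, one_mul]
    _ ≤ _ := mul_le_mul_right h1 _

private lemma conv_enorm_bound (n : ℕ) (φ g : EuclideanSpace ℝ (Fin n) → ℂ)
    (x : EuclideanSpace ℝ (Fin n)) :
    (‖(φ ⋆[ContinuousLinearMap.mul ℝ ℂ, volume] g) x‖₊ : ℝ≥0∞) ≤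
      ∫⁻ t, (‖φ t‖₊ : ℝ≥0∞) * (‖g (x - t)‖₊ : ℝ≥0∞) ∂volume := by
  rw [convolution_def]
  refine (enorm_integral_le_lintegral_enorm _).trans (le_of_eq ?_)
  refine lintegral_congr fun t => ?_
  simp [ContinuousLinearMap.mul_apply', nnnorm_mul]
  rfl

private lemma holder_step {α : Type*} [MeasurableSpace α] {ν : Measure α}
    {r : ℝ} (hr1 : 1 ≤ r) {a b : α → ℝ≥0∞} (ha : Measurable a) (hb : Measurable b) :
    (∫⁻ t, a t * b t ∂ν) ^ r ≤ (∫⁻ t, a t ∂ν) ^ (r - 1) * ∫⁻ t, a t * b t ^ r ∂ν := by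
  rcases eq_or_lt_of_le hr1 with hr | hr
  · rw [← hr]
    simp
  · have hr0 : (0:ℝ) < r := lt_trans one_pos hr
    set q : ℝ := r / (r - 1) with hqdef
    have hconj : q.HolderConjugate r := (Real.HolderConjugate.conjExponent hr).symm
    have hq0 : q ≠ 0 := hconj.ne_zero
    have key := ENNReal.lintegral_mul_le_Lp_mul_Lq ν hconj
      (ha.pow_const (1/q)).aemeasurable ((ha.pow_const (1/r)).mul hb).aemeasurable
    have hlhs : ∫⁻ t, ((fun t => a t ^ (1/q)) * fun t => a t ^ (1/r) * b t) t ∂ν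
        = ∫⁻ t, a t * b t ∂ν := by
      refine lintegral_congr fun t => ?_
      have hsum : 1/q + 1/r = 1 := by
        rw [one_div, one_div]; exact hconj.inv_add_inv_eq_one
      have : a t ^ (1/q) * a t ^ (1/r) = a t := by
        rw [← ENNReal.rpow_add_of_nonneg _ _ hconj.one_div_nonneg hconj.symm.one_div_nonneg,
          hsum, ENNReal.rpow_one]
      simp only [Pi.mul_apply]
      rw [← mul_assoc, this]
    have hr1' : ∫⁻ t, (a t ^ (1/q)) ^ q ∂ν = ∫⁻ t, a t ∂ν := by
      refine lintegral_congr fun t => ?_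
      rw [← ENNReal.rpow_mul, one_div_mul_cancel hq0, ENNReal.rpow_one]
    have hr2' : ∫⁻ t, (a t ^ (1/r) * b t) ^ r ∂ν = ∫⁻ t, a t * b t ^ r ∂ν := by
      refine lintegral_congr fun t => ?_
      rw [ENNReal.mul_rpow_of_nonneg _ _ hr0.le, ← ENNReal.rpow_mul,
        one_div_mul_cancel hr0.ne', ENNReal.rpow_one]
    change ∫⁻ t, ((fun t => a t ^ (1/q)) * fun t => a t ^ (1/r) * b t) t ∂ν ≤
      (∫⁻ t, (a t ^ (1/q)) ^ q ∂ν) ^ (1/q) * (∫⁻ t, (a t ^ (1/r) * b t) ^ r ∂ν) ^ (1/r) at key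
    rw [hlhs, hr1', hr2'] at key
    calc (∫⁻ t, a t * b t ∂ν) ^ r
        ≤ ((∫⁻ t, a t ∂ν) ^ (1/q) * (∫⁻ t, a t * b t ^ r ∂ν) ^ (1/r)) ^ r :=
          ENNReal.rpow_le_rpow key hr0.le
      _ = (∫⁻ t, a t ∂ν) ^ (r - 1) * ∫⁻ t, a t * b t ^ r ∂ν := by
          rw [ENNReal.mul_rpow_of_nonneg _ _ hr0.le, ← ENNReal.rpow_mul, ← ENNReal.rpow_mul]
          congr 1
          · congr 1
            field_simp [hqdef]
            rw [hqdef, div_mul_cancel₀ _ (by linarith : r - 1 ≠ 0)]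
          · rw [one_div_mul_cancel hr0.ne', ENNReal.rpow_one]

private lemma morrey_young_core (n : ℕ) (p : ℝ≥0∞) (μ : ℝ) (hp : 1 ≤ p)
    (φ g : EuclideanSpace ℝ (Fin n) → ℂ)
    (hφm : Measurable φ) (hgm : Measurable g) :
    morreyNorm n p μ (φ ⋆[ContinuousLinearMap.mul ℝ ℂ, volume] g) ≤
      eLpNorm φ 1 volume * morreyNorm n p μ g := by
  have hp0 : p ≠ 0 := (lt_of_lt_of_le zero_lt_one hp).ne'
  set I := eLpNorm φ 1 volume with hIdef
  set M := morreyNorm n p μ g with hMdef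
  refine iSup_le fun x₀ => iSup_le fun R => iSup_le fun hR => ?_
  set K := ENNReal.ofReal (R ^ (μ / p.toReal)) * M with hKdef
  have hw : ENNReal.ofReal (R ^ (-(μ / p.toReal))) * ENNReal.ofReal (R ^ (μ / p.toReal)) = 1 := by
    rw [← ENNReal.ofReal_mul (by positivity), ← Real.rpow_add hR, neg_add_cancel,
      Real.rpow_zero, ENNReal.ofReal_one]
  have hIl : I = ∫⁻ t, (‖φ t‖₊ : ℝ≥0∞) ∂volume := eLpNorm_one_eq_lintegral_enorm
  suffices h : eLpNorm (φ ⋆[ContinuousLinearMap.mul ℝ ℂ, volume] g) p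
      (volume.restrict (Metric.ball x₀ R)) ≤ I * K by
    calc ENNReal.ofReal (R ^ (-(μ / p.toReal))) *
        eLpNorm (φ ⋆[ContinuousLinearMap.mul ℝ ℂ, volume] g) p
          (volume.restrict (Metric.ball x₀ R))
        ≤ ENNReal.ofReal (R ^ (-(μ / p.toReal))) * (I * K) := mul_le_mul_right h _
      _ = (ENNReal.ofReal (R ^ (-(μ / p.toReal))) * ENNReal.ofReal (R ^ (μ / p.toReal))) *
          (I * M) := by rw [hKdef]; ring
      _ = I * M := by rw [hw, one_mul]
  by_cases hptop : p = ⊤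
  · -- p = ∞ case
    subst hptop
    have hae : ∀ᵐ y ∂(volume : Measure (EuclideanSpace ℝ (Fin n))), (‖g y‖₊ : ℝ≥0∞) ≤ K := by
      have hball : ∀ k : ℕ, eLpNorm g ⊤ (volume.restrict
          (Metric.ball (0 : EuclideanSpace ℝ (Fin n)) (k+1))) ≤ K := by
        intro k
        refine (morrey_ball_bound n ⊤ μ g 0 (by positivity : (0:ℝ) < (k:ℝ)+1)).trans ?_
        simp [hKdef]
        exact le_rfl
      set s : Set (EuclideanSpace ℝ (Fin n)) := {y | ¬ ((‖g y‖₊ : ℝ≥0∞) ≤ K)} with hsdef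
      have hsm : MeasurableSet s := by
        have : Measurable fun y => (‖g y‖₊ : ℝ≥0∞) := hgm.nnnorm.coe_nnreal_ennreal
        exact (measurableSet_le this measurable_const).compl
      have hnull : volume s = 0 := by
        have hsub : s ⊆ ⋃ k : ℕ, s ∩ Metric.ball (0 : EuclideanSpace ℝ (Fin n)) (k+1) := by
          intro y hy
          obtain ⟨k, hk⟩ := exists_nat_gt ‖y‖
          exact Set.mem_iUnion.2 ⟨k, hy, by
            simp only [Metric.mem_ball, dist_zero_right]
            exact lt_of_lt_of_le hk (by push_cast; linarith)⟩
        refine measure_mono_null hsub (measure_iUnion_null fun k => ?_)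
        have h1 : ∀ᵐ y ∂(volume.restrict
            (Metric.ball (0 : EuclideanSpace ℝ (Fin n)) (k+1))), (‖g y‖₊ : ℝ≥0∞) ≤ K := by
          refine (enorm_ae_le_eLpNormEssSup g _).mono fun y hy => hy.trans ?_
          rw [← eLpNorm_exponent_top]
          exact hball k
        have := ae_iff.1 h1
        rwa [Measure.restrict_apply (by exact hsm)] at this
      exact ae_iff.2 hnull
    have hbound : ∀ x : EuclideanSpace ℝ (Fin n),
        (‖(φ ⋆[ContinuousLinearMap.mul ℝ ℂ, volume] g) x‖₊ : ℝ≥0∞) ≤ I * K := by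
      intro x
      refine (conv_enorm_bound n φ g x).trans ?_
      have haet : ∀ᵐ t ∂(volume : Measure (EuclideanSpace ℝ (Fin n))),
          (‖g (x - t)‖₊ : ℝ≥0∞) ≤ K :=
        (Measure.measurePreserving_sub_left volume x).quasiMeasurePreserving.ae hae
      calc ∫⁻ t, (‖φ t‖₊ : ℝ≥0∞) * (‖g (x - t)‖₊ : ℝ≥0∞) ∂volume
          ≤ ∫⁻ t, (‖φ t‖₊ : ℝ≥0∞) * K ∂volume := by
            refine lintegral_mono_ae (haet.mono fun t ht => ?_)
            exact mul_le_mul_right ht _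
        _ = I * K := by
            rw [lintegral_mul_const K hφm.nnnorm.coe_nnreal_ennreal, hIl]
    rw [eLpNorm_exponent_top, eLpNormEssSup]
    exact essSup_le_of_ae_le _ (Filter.Eventually.of_forall hbound)
  · -- 1 ≤ p < ∞ case
    set r := p.toReal with hrdef
    have hr1 : 1 ≤ r := by
      rw [hrdef, ← ENNReal.toReal_one]
      exact ENNReal.toReal_mono hptop hp
    have hr0 : (0:ℝ) < r := lt_of_lt_of_le one_pos hr1
    set B := Metric.ball x₀ R with hBdef
    set ν := volume.restrict B with hνdef
    have ha_meas : Measurable fun t => (‖φ t‖₊ : ℝ≥0∞) := hφm.nnnorm.coe_nnreal_ennreal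
    have hg_meas : Measurable fun y => (‖g y‖₊ : ℝ≥0∞) := hgm.nnnorm.coe_nnreal_ennreal
    -- translation bound
    have hgb : ∀ t : EuclideanSpace ℝ (Fin n),
        ∫⁻ x, (‖g (x - t)‖₊ : ℝ≥0∞) ^ r ∂ν ≤ K ^ r := by
      intro t
      have hmp : MeasurePreserving (fun x : EuclideanSpace ℝ (Fin n) => x - t) volume volume :=
        measurePreserving_sub_right volume t
      have hpre : (fun x : EuclideanSpace ℝ (Fin n) => x - t) ⁻¹' (Metric.ball (x₀ - t) R) = B := by
        ext x
        simp [hBdef, Metric.mem_ball, dist_sub_eq_dist_add_right, sub_eq_add_neg]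
      have heq : ∫⁻ x, (‖g (x - t)‖₊ : ℝ≥0∞) ^ r ∂ν
          = ∫⁻ y in Metric.ball (x₀ - t) R, (‖g y‖₊ : ℝ≥0∞) ^ r ∂volume := by
        rw [hνdef, ← hpre]
        exact hmp.setLIntegral_comp_preimage measurableSet_ball (hg_meas.pow_const r)
      rw [heq]
      have hsn : ∫⁻ y in Metric.ball (x₀ - t) R, (‖g y‖₊ : ℝ≥0∞) ^ r ∂volume
          = (eLpNorm g p (volume.restrict (Metric.ball (x₀ - t) R))) ^ r := by
        rw [eLpNorm_eq_lintegral_rpow_enorm_toReal hp0 hptop, ← ENNReal.rpow_mul,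
          one_div_mul_cancel hr0.ne', ENNReal.rpow_one]
        rfl
      rw [hsn]
      exact ENNReal.rpow_le_rpow (morrey_ball_bound n p μ g (x₀ - t) hR) hr0.le
    -- product measurability for Tonelli
    have hprod : Measurable fun q : (EuclideanSpace ℝ (Fin n)) × (EuclideanSpace ℝ (Fin n)) =>
        (‖φ q.2‖₊ : ℝ≥0∞) * (‖g (q.1 - q.2)‖₊ : ℝ≥0∞) ^ r :=
      (ha_meas.comp measurable_snd).mul
        (((hg_meas.comp (measurable_fst.sub measurable_snd))).pow_const r)
    calc eLpNorm (φ ⋆[ContinuousLinearMap.mul ℝ ℂ, volume] g) p ν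
        = (∫⁻ x, (‖(φ ⋆[ContinuousLinearMap.mul ℝ ℂ, volume] g) x‖₊ : ℝ≥0∞) ^ r ∂ν) ^ (1/r) :=
          eLpNorm_eq_lintegral_rpow_enorm_toReal hp0 hptop
      _ ≤ (∫⁻ x, (∫⁻ t, (‖φ t‖₊ : ℝ≥0∞) * (‖g (x - t)‖₊ : ℝ≥0∞) ∂volume) ^ r ∂ν) ^ (1/r) := by
          refine ENNReal.rpow_le_rpow (lintegral_mono fun x => ?_) (by positivity)
          exact ENNReal.rpow_le_rpow (conv_enorm_bound n φ g x) hr0.le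
      _ ≤ (∫⁻ x, I ^ (r - 1) *
            ∫⁻ t, (‖φ t‖₊ : ℝ≥0∞) * (‖g (x - t)‖₊ : ℝ≥0∞) ^ r ∂volume ∂ν) ^ (1/r) := by
          refine ENNReal.rpow_le_rpow (lintegral_mono fun x => ?_) (by positivity)
          have hh := holder_step hr1 (ν := (volume : Measure (EuclideanSpace ℝ (Fin n))))
            (a := fun t => (‖φ t‖₊ : ℝ≥0∞)) (b := fun t => (‖g (x - t)‖₊ : ℝ≥0∞)) ha_meas
            (hg_meas.comp (measurable_const.sub measurable_id))
          rw [hIl]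
          exact hh
      _ = (I ^ (r - 1) *
            ∫⁻ t, (‖φ t‖₊ : ℝ≥0∞) * ∫⁻ x, (‖g (x - t)‖₊ : ℝ≥0∞) ^ r ∂ν ∂volume) ^ (1/r) := by
          congr 1
          rw [lintegral_const_mul _ hprod.lintegral_prod_right']
          congr 1
          rw [lintegral_lintegral_swap hprod.aemeasurable]
          refine lintegral_congr fun t => ?_
          exact lintegral_const_mul ((‖φ t‖₊ : ℝ≥0∞))
            ((hg_meas.comp (measurable_id.sub_const t)).pow_const r)
      _ ≤ (I ^ (r - 1) * ∫⁻ t, (‖φ t‖₊ : ℝ≥0∞) * K ^ r ∂volume) ^ (1/r) := by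
          refine ENNReal.rpow_le_rpow (mul_le_mul_right (lintegral_mono fun t => ?_) _)
            (by positivity)
          exact mul_le_mul_right (hgb t) _
      _ = (I ^ (r - 1) * (I * K ^ r)) ^ (1/r) := by
          rw [lintegral_mul_const _ ha_meas, hIl]
      _ = I * K := by
          have hIr : I ^ (r - 1) * I = I ^ r := by
            nth_rewrite 2 [← ENNReal.rpow_one I]
            rw [← ENNReal.rpow_add_of_nonneg _ _ (by linarith) zero_le_one, sub_add_cancel]
          have h1 : I ^ (r - 1) * (I * K ^ r) = (I * K) ^ r := by
            rw [ENNReal.mul_rpow_of_nonneg I K hr0.le, ← mul_assoc, hIr]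
          rw [h1, ← ENNReal.rpow_mul, mul_one_div_cancel hr0.ne', ENNReal.rpow_one]

/-- Young-type inequality in Morrey spaces. -/
theorem morrey_young (n : ℕ) (p : ℝ≥0∞) (μ : ℝ)
    (hp : 1 ≤ p) (hμ0 : 0 ≤ μ) (hμn : μ < n)
    (φ g : EuclideanSpace ℝ (Fin n) → ℂ)
    (hφ : Integrable φ volume) (hg : AEStronglyMeasurable g volume) :
    morreyNorm n p μ (φ ⋆[ContinuousLinearMap.mul ℝ ℂ, volume] g) ≤
      eLpNorm φ 1 volume * morreyNorm n p μ g := by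
  set φ' := hφ.1.mk φ with hφ'def
  have hφ'm : StronglyMeasurable φ' := hφ.1.stronglyMeasurable_mk
  have hφ'e : φ =ᵐ[volume] φ' := hφ.1.ae_eq_mk
  set g' := hg.mk g with hg'def
  have hg'm : StronglyMeasurable g' := hg.stronglyMeasurable_mk
  have hg'e : g =ᵐ[volume] g' := hg.ae_eq_mk
  have hconv : (φ ⋆[ContinuousLinearMap.mul ℝ ℂ, volume] g)
      = (φ' ⋆[ContinuousLinearMap.mul ℝ ℂ, volume] g') := by
    funext x
    rw [convolution_def, convolution_def]
    refine integral_congr_ae ?_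
    have h1 : (fun t => g (x - t)) =ᵐ[volume] fun t => g' (x - t) :=
      (Measure.measurePreserving_sub_left volume x).quasiMeasurePreserving.ae hg'e
    filter_upwards [hφ'e, h1] with t h₁ h₂
    simp only [h₁, h₂]
  have hmor : morreyNorm n p μ g = morreyNorm n p μ g' := by
    refine iSup_congr fun x₀ => iSup_congr fun R => iSup_congr fun _ => ?_
    rw [eLpNorm_congr_ae (ae_restrict_of_ae hg'e)]
  rw [hconv, hmor, eLpNorm_congr_ae hφ'e]
  exact morrey_young_core n p μ hp φ' g' hφ'm.measurable hg'm.measurable
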